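/- Define the substitutions $L, M, R$ on $\{0,1\}$-words by $L(0)=0$, $L(1)=10$; $M(0)=01$, $M(1)=10$; $R(0)=01$, $R(1)=1$, extended to infinite sequences letter by letter. Then each of $L, M, R$ is strictly increasing with respect to the lexicographic order on $\{0,1\}^\infty$: if $\mathbf{u} < \mathbf{v}$ then $\sigma(\mathbf{u}) < \sigma(\mathbf{v})$ for $\sigma \in \{L, M, R\}$. -/

import Mathlib

def lexLe (u v : ℕ → Bool) : Prop :=
  u = v ∨ ∃ n, (∀ k < n, u k = v k) ∧ u n < v n

def lexLt (u v : ℕ → Bool) : Prop :=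
  ∃ n, (∀ k < n, u k = v k) ∧ u n < v n

def shiftSeq (n : ℕ) (u : ℕ → Bool) : ℕ → Bool := fun k => u (n + k)

def consSeq (d : Bool) (u : ℕ → Bool) : ℕ → Bool :=
  fun k => match k with
  | 0 => d
  | k + 1 => u k

def prependSeq (m : ℕ) (d : Bool) (u : ℕ → Bool) : ℕ → Bool :=
  fun n => if n < m then d else u (n - m)

def Lsub : Bool → List Bool := fun b => cond b [true, false] [false]

def Msub : Bool → List Bool := fun b => cond b [true, false] [false, true]

def Rsub : Bool → List Bool := fun b => cond b [true] [false, true]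

/-- The image of an infinite sequence under a substitution (letterwise
concatenation); the `n`-th letter is well defined as soon as each letter image
is nonempty. -/
def subSeq (σ : Bool → List Bool) (u : ℕ → Bool) : ℕ → Bool :=
  fun n => (((List.range (n + 1)).map (fun j => σ (u j))).flatten).getD n false

/-- prefix join -/
def Jn (σ : Bool → List Bool) (u : ℕ → Bool) (N : ℕ) : List Bool :=
  ((List.range N).map (fun j => σ (u j))).flatten

lemma Jn_succ (σ : Bool → List Bool) (u : ℕ → Bool) (N : ℕ) :
    Jn σ u (N + 1) = Jn σ u N ++ σ (u N) := by
  simp [Jn, List.range_succ]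

lemma Jn_len (σ : Bool → List Bool) (hne : ∀ b, σ b ≠ []) (u : ℕ → Bool) :
    ∀ N, N ≤ (Jn σ u N).length := by
  intro N
  induction N with
  | zero => simp
  | succ N ih =>
    rw [Jn_succ]
    have : 1 ≤ (σ (u N)).length := List.length_pos_iff.mpr (hne (u N))
    simp only [List.length_append]; omega

lemma Jn_prefix (σ : Bool → List Bool) (u : ℕ → Bool) {N M : ℕ} (h : N ≤ M) :
    ∃ t, Jn σ u M = Jn σ u N ++ t := by
  induction M with
  | zero => exact ⟨[], by have : N = 0 := Nat.le_zero.mp h; simp [this]⟩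
  | succ M ih =>
    rcases Nat.lt_or_ge N (M + 1) with hlt | hge
    · obtain ⟨t, ht⟩ := ih (by omega)
      exact ⟨t ++ σ (u M), by rw [Jn_succ, ht, List.append_assoc]⟩
    · have hNe : N = M + 1 := by omega
      subst hNe; exact ⟨[], by simp⟩

lemma getD_Jn (σ : Bool → List Bool) (u : ℕ → Bool) {k N M : ℕ} (h : N ≤ M)
    (hk : k < (Jn σ u N).length) :
    (Jn σ u M).getD k false = (Jn σ u N).getD k false := by
  obtain ⟨t, ht⟩ := Jn_prefix σ u h
  rw [ht, List.getD_append _ _ _ _ hk]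

lemma subSeq_eq (σ : Bool → List Bool) (hne : ∀ b, σ b ≠ []) (u : ℕ → Bool)
    {k N : ℕ} (hk : k < (Jn σ u N).length) :
    subSeq σ u k = (Jn σ u N).getD k false := by
  have h1 : k < (Jn σ u (k + 1)).length := lt_of_lt_of_le (Nat.lt_succ_self k) (Jn_len σ hne u _)
  have hM1 : (Jn σ u (max (k + 1) N)).getD k false = (Jn σ u (k + 1)).getD k false :=
    getD_Jn σ u (le_max_left _ _) h1
  have hM2 : (Jn σ u (max (k + 1) N)).getD k false = (Jn σ u N).getD k false :=
    getD_Jn σ u (le_max_right _ _) hk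
  have : subSeq σ u k = (Jn σ u (k + 1)).getD k false := rfl
  rw [this, ← hM1, hM2]

/-- Each of the substitutions `L`, `M`, `R` is strictly increasing for the
lexicographic order on infinite binary sequences. -/
theorem stmt6 (σ : Bool → List Bool) (hσ : σ = Lsub ∨ σ = Msub ∨ σ = Rsub)
    (u v : ℕ → Bool) (h : lexLt u v) : lexLt (subSeq σ u) (subSeq σ v) := by
  have hne : ∀ b, σ b ≠ [] := by
    rcases hσ with rfl | rfl | rfl <;> intro b <;> cases b <;> simp [Lsub, Msub, Rsub]
  have hhead : ∀ b, (σ b).getD 0 false = b := by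
    rcases hσ with rfl | rfl | rfl <;> intro b <;> cases b <;> simp [Lsub, Msub, Rsub]
  obtain ⟨n, heq, hlt⟩ := h
  obtain ⟨hu, hv⟩ : u n = false ∧ v n = true := Bool.lt_iff.mp hlt
  have hJ : Jn σ u n = Jn σ v n := by
    unfold Jn
    congr 1
    apply List.map_congr_left
    intro j hj
    rw [heq j (List.mem_range.mp hj)]
  set m := (Jn σ u n).length with hm
  refine ⟨m, ?_, ?_⟩
  · intro k hk
    rw [subSeq_eq σ hne u (N := n) hk, subSeq_eq σ hne v (N := n) (hJ ▸ hk), hJ]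
  · have key : ∀ w : ℕ → Bool, (Jn σ w n).length = m →
        subSeq σ w m = (σ (w n)).getD 0 false := by
      intro w hw
      have hlen : m < (Jn σ w (n + 1)).length := by
        rw [Jn_succ, List.length_append, hw]
        have : 1 ≤ (σ (w n)).length := List.length_pos_iff.mpr (hne (w n))
        omega
      rw [subSeq_eq σ hne w hlen, Jn_succ, List.getD_append_right _ _ _ _ (by omega), hw]
      simp
    rw [key u rfl, key v (by rw [← hJ]), hu, hv, hhead, hhead]
    simp
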